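/- Fix α ∈ (0,1/2) and γ ∈ (0,α). Let Y = (Yβ, Yδ′)′ ∼ N((β, δ′)′, Ω) with δ ≥ 0, and let s ⊆ {1,…,k} be an index subset (possibly empty) such that every entry of the row vector a := Ω_{βδ^{(s)}}Ω_{δ^{(s)}δ^{(s)}}^{-1} is non-negative. Put ω := Ω_{βδ^{(s)}}Ω_{δ^{(s)}δ^{(s)}}^{-1}Ω_{δ^{(s)}β} ∈ [0,1) and let c(ω) be the constant satisfying P(Z1 > min{z_{1−α+γ}, Z̃2 + c(ω)}) = α for a centered bivariate Gaussian (Z1, Z̃2) with covariance [[1, ω], [ω, ω]]. Then 1−α ≤ P(β ≥ Yβ − min{z_{1−α+γ}, a·Yδ^{(s)} + c(ω)}) ≤ 1−α+γ for all β ∈ ℝ and δ ≥ 0. -/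

import Mathlib

open MeasureTheory ProbabilityTheory Real Matrix

/-- The standard normal distribution on `ℝ`. -/
noncomputable def stdNormal : Measure ℝ := gaussianReal 0 1

/-- The product of two independent standard normals on `ℝ × ℝ`. -/
noncomputable def stdNormal2 : Measure (ℝ × ℝ) := stdNormal.prod stdNormal

/-- For `ω ∈ [0,1)`, `Z̃₂ p = ω * p.1 + √(ω - ω²) * p.2` so that, under `stdNormal2`,
`(Z₁, Z̃₂) = (p.1, Z̃₂ p)` is centered Gaussian with covariance `[[1, ω], [ω, ω]]`. -/
noncomputable def Ztilde2 (ω : ℝ) (p : ℝ × ℝ) : ℝ := ω * p.1 + Real.sqrt (ω - ω ^ 2) * p.2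

/-- The coefficient vector `Ω_{δ⁽ˢ⁾δ⁽ˢ⁾}⁻¹ Ω_{δ⁽ˢ⁾β}`; by symmetry of `Ω` its entries are those
of the row vector `Ω_{βδ⁽ˢ⁾} Ω_{δ⁽ˢ⁾δ⁽ˢ⁾}⁻¹`.  Index `0` corresponds to `β` and index `j.succ`
to `δ_j`. -/
noncomputable def coefVec {k : ℕ} (Ω : Matrix (Fin (k + 1)) (Fin (k + 1)) ℝ)
    (s : Finset (Fin k)) : {i // i ∈ s} → ℝ :=
  (Matrix.of fun i j : {i // i ∈ s} => Ω i.1.succ j.1.succ)⁻¹.mulVec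
    fun j : {i // i ∈ s} => Ω j.1.succ 0

/-- `ω(s) = Ω_{βδ⁽ˢ⁾} Ω_{δ⁽ˢ⁾δ⁽ˢ⁾}⁻¹ Ω_{δ⁽ˢ⁾β}`. -/
noncomputable def omegaOf {k : ℕ} (Ω : Matrix (Fin (k + 1)) (Fin (k + 1)) ℝ)
    (s : Finset (Fin k)) : ℝ :=
  ∑ j : {i // i ∈ s}, coefVec Ω s j * Ω 0 j.1.succ

/-- The law of `Y = (Yβ, Yδ')' ~ N((β, δ')', Ω)`, realized as the image of a vector of `k + 1`
independent standard normals under the affine map `x ↦ mean + R x`, where `R Rᵀ = Ω`. -/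
noncomputable def gaussLaw {k : ℕ} (R : Matrix (Fin (k + 1)) (Fin (k + 1)) ℝ)
    (β : ℝ) (δ : Fin k → ℝ) : Measure (Fin (k + 1) → ℝ) :=
  Measure.map (fun x (i : Fin (k + 1)) => Fin.cases β δ i + ∑ j, R i j * x j)
    (Measure.pi fun _ : Fin (k + 1) => stdNormal)

instance : IsProbabilityMeasure stdNormal := by unfold stdNormal; infer_instance
instance : IsProbabilityMeasure stdNormal2 := by unfold stdNormal2; infer_instance

noncomputable def nuPi (n : ℕ) : Measure (Fin n → ℝ) := Measure.pi fun _ => stdNormal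
instance (n : ℕ) : IsProbabilityMeasure (nuPi n) := by unfold nuPi; infer_instance

noncomputable def EuclideanSpace.measurableEquiv (ι : Type*) [Fintype ι] :
    EuclideanSpace ℝ ι ≃ᵐ (ι → ℝ) :=
  (MeasurableEquiv.toLp 2 (ι → ℝ)).symm

lemma EuclideanSpace.volume_preserving_measurableEquiv (ι : Type*) [Fintype ι] :
    MeasurePreserving (EuclideanSpace.measurableEquiv ι) :=
  EuclideanSpace.volume_preserving_symm_measurableEquiv_toLp ι

noncomputable def nuE (n : ℕ) : Measure (EuclideanSpace ℝ (Fin n)) :=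
  Measure.map (EuclideanSpace.measurableEquiv (Fin n)).symm (nuPi n)

noncomputable def gaussDens (n : ℕ) : EuclideanSpace ℝ (Fin n) → ENNReal :=
  fun x => ENNReal.ofReal ((Real.sqrt (2 * π))⁻¹ ^ n * Real.exp (-(‖x‖ ^ 2) / 2))

lemma gaussDens_measurable (n : ℕ) : Measurable (gaussDens n) := by
  apply Measurable.ennreal_ofReal; fun_prop

noncomputable def toE {n : ℕ} (u : Fin n → ℝ) : EuclideanSpace ℝ (Fin n) :=
  (EuclideanSpace.measurableEquiv (Fin n)).symm u

lemma lintegral_pi_prod : ∀ {n : ℕ} (μ : Fin n → Measure ℝ) [∀ i, SigmaFinite (μ i)]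
    (f : Fin n → ℝ → ENNReal), (∀ i, Measurable (f i)) →
    ∫⁻ x, ∏ i, f i (x i) ∂(Measure.pi μ) = ∏ i, ∫⁻ t, f i t ∂(μ i) := by
  intro n
  induction n with
  | zero => intro μ _ f hf; simp [Measure.pi_of_empty]
  | succ n ih =>
    intro μ _ f hf
    have hmp := (measurePreserving_piFinSuccAbove μ 0).symm
    rw [← hmp.lintegral_comp (by
      exact Finset.measurable_prod _ (fun i _ => (hf i).comp (measurable_pi_apply i)))]
    have heq : ∀ z : ℝ × (Fin n → ℝ),
        (∏ i, f i (((MeasurableEquiv.piFinSuccAbove (fun _ => ℝ) 0).symm z) i))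
        = f 0 z.1 * ∏ j, f (Fin.succ j) (z.2 j) := by
      intro z
      simp [MeasurableEquiv.piFinSuccAbove_symm_apply, Fin.insertNthEquiv,
        Fin.prod_univ_succ, Fin.zero_succAbove]
    simp_rw [heq]
    have h2 := lintegral_prod_mul (μ := μ 0)
      (ν := Measure.pi fun j => μ (Fin.succAbove 0 j))
      (f := f 0) (g := fun y : Fin n → ℝ => ∏ j, f (Fin.succ j) (y j))
      ((hf 0).aemeasurable)
      ((Finset.measurable_prod _ (fun j _ => (hf (Fin.succ j)).comp (measurable_pi_apply j))).aemeasurable)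
    rw [h2]
    have h3 : (Measure.pi fun j => μ (Fin.succAbove 0 j)) = Measure.pi fun j : Fin n => μ j.succ := by
      rfl
    rw [h3, ih _ _ (fun j => hf (Fin.succ j)), Fin.prod_univ_succ]

lemma map_withDensity_equiv {α β : Type*} [MeasurableSpace α] [MeasurableSpace β]
    (e : α ≃ᵐ β) (μ : Measure α) {g : β → ENNReal} (hg : Measurable g) :
    Measure.map e (μ.withDensity (g ∘ e)) = (Measure.map e μ).withDensity g := by
  ext s hs
  rw [Measure.map_apply e.measurable hs, withDensity_apply _ (e.measurable hs),
    withDensity_apply _ hs,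
    setLIntegral_map hs hg e.measurable]
  rfl

-- I1: pi of stdNormal as density wrt pi volume
lemma pi_stdNormal_eq {n : ℕ} :
    (Measure.pi fun _ : Fin n => stdNormal)
      = (volume : Measure (Fin n → ℝ)).withDensity
          (fun x => ∏ i, gaussianPDF 0 1 (x i)) := by
  refine Measure.pi_eq fun s hs => ?_
  rw [withDensity_apply _ (MeasurableSet.univ_pi hs)]
  have h1 : ∫⁻ x in Set.univ.pi s, ∏ i, gaussianPDF 0 1 (x i)
      = ∫⁻ x : Fin n → ℝ, ∏ i, (s i).indicator (gaussianPDF 0 1) (x i) := by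
    rw [← lintegral_indicator (MeasurableSet.univ_pi hs)]
    congr 1
    ext x
    by_cases hx : x ∈ Set.univ.pi s
    · rw [Set.indicator_of_mem hx]
      refine Finset.prod_congr rfl fun i _ => ?_
      rw [Set.indicator_of_mem (hx i (Set.mem_univ i))]
    · rw [Set.indicator_of_notMem hx]
      obtain ⟨i, hi⟩ : ∃ i, x i ∉ s i := by simpa [Set.mem_pi] using hx
      exact (Finset.prod_eq_zero (Finset.mem_univ i) (by rw [Set.indicator_of_notMem hi])).symm
  rw [h1, volume_pi, lintegral_pi_prod _ _ (fun i => (measurable_gaussianPDF 0 1).indicator (hs i))]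
  refine Finset.prod_congr rfl fun i _ => ?_
  rw [lintegral_indicator (hs i), stdNormal,
    gaussianReal_of_var_ne_zero 0 one_ne_zero, withDensity_apply _ (hs i)]

lemma prod_gaussianPDF {n : ℕ} (x : Fin n → ℝ) :
    ∏ i, gaussianPDF 0 1 (x i)
      = ENNReal.ofReal ((Real.sqrt (2 * π))⁻¹ ^ n * Real.exp (-(∑ i, x i ^ 2) / 2)) := by
  have hpdf : ∀ t : ℝ, gaussianPDF 0 1 t
      = ENNReal.ofReal ((Real.sqrt (2 * π))⁻¹ * Real.exp (-(t ^ 2) / 2)) := by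
    intro t
    simp [gaussianPDF, gaussianPDFReal]
  simp_rw [hpdf]
  rw [← ENNReal.ofReal_prod_of_nonneg]
  · congr 1
    rw [Finset.prod_mul_distrib, Finset.prod_const, ← Real.exp_sum]
    congr 1
    · simp [Finset.card_univ]
    · rw [← Finset.sum_div, ← Finset.sum_neg_distrib]
  · intro i _
    positivity

-- I9
lemma map_eval_nuPi {n : ℕ} (i : Fin n) :
    Measure.map (fun y : Fin n → ℝ => y i) (nuPi n) = stdNormal := by
  ext s hs
  rw [Measure.map_apply (measurable_pi_apply i) hs]
  have hpre : (fun y : Fin n → ℝ => y i) ⁻¹' s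
      = Set.univ.pi (fun l => if l = i then s else Set.univ) := by
    ext y
    simp only [Set.mem_preimage, Set.mem_pi, Set.mem_univ, forall_true_left]
    constructor
    · intro h l; by_cases hl : l = i <;> simp [hl, h]
    · intro h; have := h i; simpa using this
  rw [hpre, nuPi, Measure.pi_pi]
  have : ∀ l : Fin n, stdNormal (if l = i then s else Set.univ)
      = if l = i then stdNormal s else 1 := by
    intro l; by_cases hl : l = i <;> simp [hl]
  simp_rw [this]
  rw [Finset.prod_ite_eq' Finset.univ i (fun _ => stdNormal s)]
  simp

-- I8
lemma map_pair_eval_nuPi {n : ℕ} (i j : Fin n) (hij : i ≠ j) :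
    Measure.map (fun y : Fin n → ℝ => (y i, y j)) (nuPi n) = stdNormal2 := by
  refine (Measure.prod_eq fun s t hs ht => ?_).symm
  rw [Measure.map_apply (by fun_prop) (hs.prod ht)]
  have hpre : (fun y : Fin n → ℝ => (y i, y j)) ⁻¹' (s ×ˢ t)
      = Set.univ.pi (fun l => if l = i then s else if l = j then t else Set.univ) := by
    ext y
    simp only [Set.mem_preimage, Set.mem_prod, Set.mem_pi, Set.mem_univ, forall_true_left]
    constructor
    · rintro ⟨h1, h2⟩ l
      rcases eq_or_ne l i with rfl | hli
      · simp [hij, h1]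
      · rcases eq_or_ne l j with rfl | hlj
        · simp [hli, h2]
        · simp [hli, hlj]
    · intro h
      refine ⟨?_, ?_⟩
      · have := h i; simpa using this
      · have := h j; simpa [hij.symm] using this
  rw [hpre, nuPi, Measure.pi_pi]
  have hv : ∀ l : Fin n, stdNormal (if l = i then s else if l = j then t else Set.univ)
      = if l = i then stdNormal s else if l = j then stdNormal t else 1 := by
    intro l
    rcases eq_or_ne l i with rfl | hli
    · simp
    · rcases eq_or_ne l j with rfl | hlj
      · simp [hli]
      · simp [hli, hlj]
  simp_rw [hv]
  have hsub : ∀ l ∈ Finset.univ, l ∉ ({i, j} : Finset (Fin n)) →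
      (if l = i then stdNormal s else if l = j then stdNormal t else 1) = 1 := by
    intro l _ hl
    simp only [Finset.mem_insert, Finset.mem_singleton] at hl
    push_neg at hl
    simp [hl.1, hl.2]
  rw [← Finset.prod_subset (Finset.subset_univ ({i, j} : Finset (Fin n))) hsub,
    Finset.prod_pair hij]
  simp [hij, hij.symm]

-- I5
lemma nuE_eq (n : ℕ) :
    nuE n = (volume : Measure (EuclideanSpace ℝ (Fin n))).withDensity (gaussDens n) := by
  have hF : (fun x : Fin n → ℝ => ∏ i, gaussianPDF 0 1 (x i))
      = (gaussDens n) ∘ ⇑(EuclideanSpace.measurableEquiv (Fin n)).symm := by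
    funext x
    have hnorm : ‖(EuclideanSpace.measurableEquiv (Fin n)).symm x‖ ^ 2 = ∑ i, x i ^ 2 := by
      rw [EuclideanSpace.norm_eq, Real.sq_sqrt (by positivity)]
      refine Finset.sum_congr rfl fun i _ => ?_
      show ‖x i‖ ^ 2 = x i ^ 2
      rw [Real.norm_eq_abs, sq_abs]
    rw [prod_gaussianPDF]
    show _ = gaussDens n ((EuclideanSpace.measurableEquiv (Fin n)).symm x)
    unfold gaussDens
    rw [hnorm]
  rw [nuE, nuPi, pi_stdNormal_eq, hF,
    map_withDensity_equiv _ _ (gaussDens_measurable n),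
    (MeasurePreserving.symm _ (EuclideanSpace.volume_preserving_measurableEquiv (Fin n))).map_eq]

-- I6
lemma map_isometry_nuE {n : ℕ}
    (L : EuclideanSpace ℝ (Fin n) ≃ₗᵢ[ℝ] EuclideanSpace ℝ (Fin n)) :
    Measure.map (⇑L) (nuE n) = nuE n := by
  rw [nuE_eq]
  have hg : gaussDens n = (gaussDens n) ∘ ⇑L.toMeasurableEquiv := by
    funext x
    simp [gaussDens, L.norm_map]
  calc Measure.map (⇑L) (volume.withDensity (gaussDens n))
      = Measure.map (⇑L.toMeasurableEquiv)
          (volume.withDensity ((gaussDens n) ∘ ⇑L.toMeasurableEquiv)) := by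
        rw [← hg, LinearIsometryEquiv.coe_toMeasurableEquiv]
    _ = (Measure.map (⇑L.toMeasurableEquiv) volume).withDensity (gaussDens n) :=
        map_withDensity_equiv _ _ (gaussDens_measurable n)
    _ = volume.withDensity (gaussDens n) := by
        rw [LinearIsometryEquiv.coe_toMeasurableEquiv, L.measurePreserving.map_eq]

-- I7
lemma map_onb_coords {n : ℕ}
    (b : OrthonormalBasis (Fin n) ℝ (EuclideanSpace ℝ (Fin n))) :
    Measure.map (fun x : Fin n → ℝ =>
      (EuclideanSpace.measurableEquiv (Fin n))
        (b.repr ((EuclideanSpace.measurableEquiv (Fin n)).symm x))) (nuPi n) = nuPi n := by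
  set e := EuclideanSpace.measurableEquiv (Fin n) with he
  have m1 : Measurable (⇑e.symm) := e.symm.measurable
  have m2 : Measurable (⇑b.repr) := b.repr.continuous.measurable
  have m3 : Measurable (⇑e) := e.measurable
  have h0 : Measure.map (fun x : Fin n → ℝ => e (b.repr (e.symm x))) (nuPi n)
      = Measure.map (⇑e) (Measure.map (⇑b.repr) (Measure.map (⇑e.symm) (nuPi n))) := by
    rw [Measure.map_map m2 m1, Measure.map_map m3 (m2.comp m1)]
    rfl
  rw [h0]
  have : Measure.map (⇑e.symm) (nuPi n) = nuE n := rfl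
  rw [this, map_isometry_nuE b.repr, nuE, Measure.map_map m3 m1,
    MeasurableEquiv.self_comp_symm, Measure.map_id]

lemma inner_toE {n : ℕ} (a b : Fin n → ℝ) :
    (inner ℝ (toE a) (toE b) : ℝ) = ∑ i, a i * b i := by
  rw [PiLp.inner_apply]
  exact Finset.sum_congr rfl fun i _ => by rw [real_inner_comm]; rfl

lemma norm_toE_sq {n : ℕ} (a : Fin n → ℝ) : ‖toE a‖ ^ 2 = ∑ i, a i ^ 2 := by
  rw [← real_inner_self_eq_norm_sq, inner_toE]
  exact Finset.sum_congr rfl fun i _ => (sq (a i)).symm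

-- coordinate measurability of forms
lemma measurable_form {n : ℕ} (u : Fin n → ℝ) :
    Measurable (fun x : Fin n → ℝ => ∑ i, u i * x i) := by fun_prop

-- L1
lemma map_form_nuPi {n : ℕ} (u : Fin n → ℝ) (hu : ∑ i, u i ^ 2 = 1) :
    Measure.map (fun x : Fin n → ℝ => ∑ i, u i * x i) (nuPi n) = stdNormal := by
  have hn : 0 < n := by
    by_contra h
    push_neg at h
    interval_cases n
    · simp at hu
  set i0 : Fin n := ⟨0, hn⟩
  set v : Fin n → EuclideanSpace ℝ (Fin n) := fun l => if l = i0 then toE u else 0 with hv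
  have hvon : Orthonormal ℝ (({i0} : Set (Fin n)).restrict v) := by
    rw [orthonormal_iff_ite]
    rintro ⟨p, hp⟩ ⟨q, hq⟩
    simp only [Set.mem_singleton_iff] at hp hq
    subst hp; subst hq
    simp only [Set.restrict, Set.domRestrict_apply, hv, if_true, Subtype.mk.injEq, eq_self_iff_true]
    rw [inner_toE]
    rw [show (∑ i, u i * u i) = ∑ i, u i ^ 2 from Finset.sum_congr rfl fun i _ => (sq (u i)).symm, hu]
  obtain ⟨b, hb⟩ := hvon.exists_orthonormalBasis_extension_of_card_eq (by simp)
  have hb0 : b i0 = toE u := by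
    have := hb i0 (Set.mem_singleton i0)
    simpa [hv] using this
  have hkey : (fun x : Fin n → ℝ => ∑ i, u i * x i)
      = (fun y : Fin n → ℝ => y i0) ∘ (fun x : Fin n → ℝ =>
          (EuclideanSpace.measurableEquiv (Fin n))
            (b.repr ((EuclideanSpace.measurableEquiv (Fin n)).symm x))) := by
    funext x
    show ∑ i, u i * x i = b.repr ((EuclideanSpace.measurableEquiv (Fin n)).symm x) i0
    rw [OrthonormalBasis.repr_apply_apply, hb0]
    exact (inner_toE u x).symm
  have hmeas : Measurable fun x : Fin n → ℝ =>
      (EuclideanSpace.measurableEquiv (Fin n))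
        (b.repr ((EuclideanSpace.measurableEquiv (Fin n)).symm x)) := by
    exact (EuclideanSpace.measurableEquiv (Fin n)).measurable.comp
      (b.repr.continuous.measurable.comp
        (EuclideanSpace.measurableEquiv (Fin n)).symm.measurable)
  rw [hkey, ← Measure.map_map (measurable_pi_apply i0) hmeas,
    map_onb_coords, map_eval_nuPi]

-- L2
lemma map_pair_form_nuPi {n : ℕ} (hn : 1 < n) (u w : Fin n → ℝ)
    (hu : ∑ i, u i * u i = 1) (hw : ∑ i, w i * w i = 1) (huw : ∑ i, u i * w i = 0) :
    Measure.map (fun x : Fin n → ℝ => (∑ i, u i * x i, ∑ i, w i * x i)) (nuPi n)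
      = stdNormal2 := by
  set i0 : Fin n := ⟨0, by omega⟩ with hi0
  set i1 : Fin n := ⟨1, hn⟩ with hi1
  have h01 : i0 ≠ i1 := by simp [hi0, hi1, Fin.ext_iff]
  set v : Fin n → EuclideanSpace ℝ (Fin n) :=
    fun l => if l = i0 then toE u else if l = i1 then toE w else 0 with hv
  have hvon : Orthonormal ℝ (({i0, i1} : Set (Fin n)).restrict v) := by
    rw [orthonormal_iff_ite]
    rintro ⟨p, hp⟩ ⟨q, hq⟩
    simp only [Set.mem_insert_iff, Set.mem_singleton_iff] at hp hq
    have hval : ∀ r (hr : r = i0 ∨ r = i1), v r = if r = i0 then toE u else toE w := by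
      intro r hr
      rcases hr with rfl | rfl
      · simp [hv]
      · simp [hv, h01.symm]
    simp only [Set.restrict, Set.domRestrict_apply, Subtype.mk.injEq]
    rw [hval p hp, hval q hq]
    rcases hp with rfl | rfl <;> rcases hq with rfl | rfl
    · simp only [eq_self_iff_true, if_true, inner_toE]
      exact hu
    · simp [h01, h01.symm, inner_toE, huw]
    · have h' : (∑ i, w i * u i) = ∑ i, u i * w i :=
        Finset.sum_congr rfl fun i _ => mul_comm _ _
      simp [h01, h01.symm, inner_toE]
      exact h'.trans huw
    · simp only [h01.symm, eq_self_iff_true, if_true, if_false, inner_toE]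
      exact hw
  obtain ⟨b, hb⟩ := hvon.exists_orthonormalBasis_extension_of_card_eq (by simp)
  have hb0 : b i0 = toE u := by
    have := hb i0 (by simp)
    simpa [hv] using this
  have hb1 : b i1 = toE w := by
    have := hb i1 (by simp)
    simpa [hv, h01.symm] using this
  have hkey : (fun x : Fin n → ℝ => (∑ i, u i * x i, ∑ i, w i * x i))
      = (fun y : Fin n → ℝ => (y i0, y i1)) ∘ (fun x : Fin n → ℝ =>
          (EuclideanSpace.measurableEquiv (Fin n))
            (b.repr ((EuclideanSpace.measurableEquiv (Fin n)).symm x))) := by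
    funext x
    show (∑ i, u i * x i, ∑ i, w i * x i)
      = (b.repr ((EuclideanSpace.measurableEquiv (Fin n)).symm x) i0,
         b.repr ((EuclideanSpace.measurableEquiv (Fin n)).symm x) i1)
    rw [OrthonormalBasis.repr_apply_apply, OrthonormalBasis.repr_apply_apply, hb0, hb1]
    rw [show (inner ℝ (toE u) ((EuclideanSpace.measurableEquiv (Fin n)).symm x) : ℝ)
        = ∑ i, u i * x i from inner_toE u x,
      show (inner ℝ (toE w) ((EuclideanSpace.measurableEquiv (Fin n)).symm x) : ℝ)
        = ∑ i, w i * x i from inner_toE w x]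
  have hmeas : Measurable fun x : Fin n → ℝ =>
      (EuclideanSpace.measurableEquiv (Fin n))
        (b.repr ((EuclideanSpace.measurableEquiv (Fin n)).symm x)) := by
    exact (EuclideanSpace.measurableEquiv (Fin n)).measurable.comp
      (b.repr.continuous.measurable.comp
        (EuclideanSpace.measurableEquiv (Fin n)).symm.measurable)
  rw [hkey, ← Measure.map_map (by fun_prop) hmeas, map_onb_coords,
    map_pair_eval_nuPi i0 i1 h01]

lemma joint_law {n : ℕ} (u v : Fin n → ℝ) (ω : ℝ) (hω0 : 0 ≤ ω) (hω1 : ω < 1)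
    (hn : ω ≠ 0 → 1 < n)
    (hu : ∑ i, u i * u i = 1) (huv : ∑ i, u i * v i = ω) (hv : ∑ i, v i * v i = ω) :
    Measure.map (fun x : Fin n → ℝ => (∑ i, u i * x i, ∑ i, v i * x i)) (nuPi n)
      = Measure.map (fun p : ℝ × ℝ => (p.1, Ztilde2 ω p)) stdNormal2 := by
  rcases eq_or_lt_of_le hω0 with hω | hωpos
  · -- ω = 0 : v = 0
    have hv0 : ∀ i, v i = 0 := by
      intro i
      have h := (Finset.sum_eq_zero_iff_of_nonneg
        (fun j (_ : j ∈ Finset.univ) => mul_self_nonneg (v j))).mp (by rw [hv, ← hω]) i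
        (Finset.mem_univ i)
      exact mul_self_eq_zero.mp h
    have hZ : ∀ p : ℝ × ℝ, Ztilde2 ω p = 0 := by
      intro p
      simp [Ztilde2, ← hω]
    have hL : (fun x : Fin n → ℝ => (∑ i, u i * x i, ∑ i, v i * x i))
        = (fun t : ℝ => (t, (0:ℝ))) ∘ (fun x => ∑ i, u i * x i) := by
      funext x
      simp [hv0]
    have hR : (fun p : ℝ × ℝ => (p.1, Ztilde2 ω p))
        = (fun t : ℝ => (t, (0:ℝ))) ∘ Prod.fst := by
      funext p
      simp [hZ]
    rw [hL, hR, ← Measure.map_map (by fun_prop) (measurable_form u),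
      ← Measure.map_map (by fun_prop) measurable_fst,
      map_form_nuPi u (by rw [← hu]; exact Finset.sum_congr rfl fun i _ => sq (u i))]
    congr 1
    rw [stdNormal2, Measure.map_fst_prod]
    simp
  · -- ω > 0
    have hn2 : 1 < n := hn (ne_of_gt hωpos)
    have hr2 : Real.sqrt (ω - ω ^ 2) ^ 2 = ω - ω ^ 2 := by
      rw [Real.sq_sqrt]
      nlinarith
    have hrpos : 0 < Real.sqrt (ω - ω ^ 2) := Real.sqrt_pos.mpr (by nlinarith)
    set r := Real.sqrt (ω - ω ^ 2) with hrdef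
    set w : Fin n → ℝ := fun i => (v i - ω * u i) / r with hwdef
    have hexp : ∑ i, (v i - ω * u i) * (v i - ω * u i) = ω - ω ^ 2 := by
      have h1 : ∀ i, (v i - ω * u i) * (v i - ω * u i)
          = v i * v i - 2 * ω * (u i * v i) + ω ^ 2 * (u i * u i) := fun i => by ring
      simp_rw [h1]
      rw [Finset.sum_add_distrib, Finset.sum_sub_distrib, ← Finset.mul_sum, ← Finset.mul_sum,
        hu, hv, huv]
      ring
    have hww : ∑ i, w i * w i = 1 := by
      have h1 : ∀ i, w i * w i = (v i - ω * u i) * (v i - ω * u i) / r ^ 2 := fun i => by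
        rw [hwdef]; ring
      simp_rw [h1]
      rw [← Finset.sum_div, hexp, hr2, div_self (by nlinarith)]
    have huw : ∑ i, u i * w i = 0 := by
      have h1 : ∀ i, u i * w i = (u i * v i - ω * (u i * u i)) / r := fun i => by
        rw [hwdef]; ring
      simp_rw [h1]
      rw [← Finset.sum_div, Finset.sum_sub_distrib, ← Finset.mul_sum, hu, huv]
      simp
    have hL : (fun x : Fin n → ℝ => (∑ i, u i * x i, ∑ i, v i * x i))
        = (fun q : ℝ × ℝ => (q.1, ω * q.1 + r * q.2))
          ∘ (fun x => (∑ i, u i * x i, ∑ i, w i * x i)) := by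
      funext x
      simp only [Function.comp_apply]
      congr 1
      have h1 : ∀ i, v i = ω * u i + r * w i := by
        intro i
        rw [hwdef]
        field_simp
        ring
      calc ∑ i, v i * x i = ∑ i, (ω * (u i * x i) + r * (w i * x i)) := by
            refine Finset.sum_congr rfl fun i _ => ?_
            rw [h1 i]; ring
        _ = ω * ∑ i, u i * x i + r * ∑ i, w i * x i := by
            simp only [Finset.sum_add_distrib, ← Finset.mul_sum]
    have hpair : Measurable (fun x : Fin n → ℝ => (∑ i, u i * x i, ∑ i, w i * x i)) :=
      (measurable_form u).prodMk (measurable_form w)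
    rw [hL, ← Measure.map_map (by fun_prop) hpair, map_pair_form_nuPi hn2 u w hu hww huw]
    have hfun : (fun q : ℝ × ℝ => (q.1, ω * q.1 + r * q.2))
        = (fun p : ℝ × ℝ => (p.1, Ztilde2 ω p)) := by
      funext p
      simp [Ztilde2, hrdef]
    rw [hfun]

lemma posDef_submatrix_inj {m l : Type*} [Fintype m] [Fintype l] [DecidableEq l]
    {M : Matrix l l ℝ} (hM : M.PosDef) (e : m → l) (he : Function.Injective e) :
    (Matrix.of fun i j : m => M (e i) (e j)).PosDef := by
  classical
  constructor
  · ext i j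
    simp only [conjTranspose_apply, Matrix.of_apply, star_trivial]
    exact ((hM.1.apply (e i) (e j)).symm.trans (star_trivial _)).symm
  · exact (hM.submatrix he).2

/-- coverage bounds `1 - α ≤ P(β ≥ Yβ - min{z_{1-α+γ}, a·Yδ⁽ˢ⁾ + c(ω)}) ≤ 1 - α + γ`
for any index subset `s` whose coefficient vector `a = Ω_{βδ⁽ˢ⁾} Ω_{δ⁽ˢ⁾δ⁽ˢ⁾}⁻¹` is non-negative,
uniformly over `β ∈ ℝ` and `δ ≥ 0`. -/
theorem stmt5 (k : ℕ) (α γ : ℝ) (hα : α ∈ Set.Ioo (0 : ℝ) (1 / 2)) (hγ : γ ∈ Set.Ioo 0 α)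
    (Ω : Matrix (Fin (k + 1)) (Fin (k + 1)) ℝ) (hpd : Ω.PosDef) (hdiag : ∀ i, Ω i i = 1)
    (R : Matrix (Fin (k + 1)) (Fin (k + 1)) ℝ) (hR : R * Rᵀ = Ω)
    (s : Finset (Fin k)) (hann : ∀ j, 0 ≤ coefVec Ω s j)
    (ω : ℝ) (hω : ω = omegaOf Ω s) (hωmem : ω ∈ Set.Ico (0 : ℝ) 1)
    (zαγ c : ℝ)
    (hzαγ : stdNormal (Set.Iic zαγ) = ENNReal.ofReal (1 - α + γ))
    (hc : stdNormal2 {p : ℝ × ℝ | min zαγ (Ztilde2 ω p + c) < p.1} = ENNReal.ofReal α)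
    (β : ℝ) (δ : Fin k → ℝ) (hδ : ∀ i, 0 ≤ δ i)
    (A : Set (Fin (k + 1) → ℝ))
    (hA : A = {y : Fin (k + 1) → ℝ |
      y 0 - min zαγ ((∑ j : {i // i ∈ s}, coefVec Ω s j * y j.1.succ) + c) ≤ β}) :
    ENNReal.ofReal (1 - α) ≤ gaussLaw R β δ A ∧
    gaussLaw R β δ A ≤ ENNReal.ofReal (1 - α + γ) := by
  classical
  obtain ⟨hα0, hα12⟩ := hα
  obtain ⟨hγ0, hγα⟩ := hγ
  obtain ⟨hω0, hω1⟩ := hωmem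
  set a : {i // i ∈ s} → ℝ := coefVec Ω s with ha
  set u : Fin (k+1) → ℝ := fun j => R 0 j with hu
  set v : Fin (k+1) → ℝ := fun j => ∑ i : {i // i ∈ s}, a i * R i.1.succ j with hv
  -- basic facts from R Rᵀ = Ω
  have hRR : ∀ p q : Fin (k+1), ∑ j, R p j * R q j = Ω p q := by
    intro p q
    rw [← hR, Matrix.mul_apply]
    exact Finset.sum_congr rfl fun j _ => by rw [Matrix.transpose_apply]
  have hΩsymm : ∀ p q : Fin (k+1), Ω p q = Ω q p := by
    intro p q
    have := hpd.1.apply p q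
    rw [star_trivial] at this
    exact this.symm
  -- the embedding of the subtype
  set e : {i // i ∈ s} → Fin (k+1) := fun i => i.1.succ with he
  have he_inj : Function.Injective e := by
    intro i j hij
    exact Subtype.ext (Fin.succ_injective k hij)
  -- the submatrix is posdef hence invertible
  set B : Matrix {i // i ∈ s} {i // i ∈ s} ℝ :=
    Matrix.of fun i j : {i // i ∈ s} => Ω i.1.succ j.1.succ with hB
  have hBpd : B.PosDef := posDef_submatrix_inj hpd e he_inj
  have hBdet : IsUnit B.det := isUnit_iff_ne_zero.mpr (ne_of_gt hBpd.det_pos)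
  have hBa : B *ᵥ a = fun j : {i // i ∈ s} => Ω j.1.succ 0 := by
    rw [ha, coefVec, Matrix.mulVec_mulVec, Matrix.mul_nonsing_inv _ hBdet]
    simp
  -- quadratic form value
  have hquad : ∑ i : {i // i ∈ s}, a i * (∑ j : {i // i ∈ s}, B i j * a j) = ω := by
    have h1 : ∀ i : {i // i ∈ s}, (∑ j : {i // i ∈ s}, B i j * a j) = Ω i.1.succ 0 := by
      intro i
      have := congrFun hBa i
      simpa [Matrix.mulVec, dotProduct] using this
    simp_rw [h1]
    rw [hω, omegaOf]
    refine Finset.sum_congr rfl fun i _ => ?_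
    rw [hΩsymm i.1.succ 0]
  -- Gram facts
  have huu : ∑ j, u j * u j = 1 := by
    rw [hu]; rw [hRR 0 0, hdiag 0]
  have huv : ∑ j, u j * v j = ω := by
    rw [hu, hv]
    calc ∑ j, R 0 j * ∑ i : {i // i ∈ s}, a i * R i.1.succ j
        = ∑ j, ∑ i : {i // i ∈ s}, a i * (R 0 j * R i.1.succ j) := by
          refine Finset.sum_congr rfl fun j _ => ?_
          rw [Finset.mul_sum]
          exact Finset.sum_congr rfl fun i _ => by ring
      _ = ∑ i : {i // i ∈ s}, a i * ∑ j, R 0 j * R i.1.succ j := by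
          rw [Finset.sum_comm]
          exact Finset.sum_congr rfl fun i _ => by rw [Finset.mul_sum]
      _ = ∑ i : {i // i ∈ s}, a i * Ω 0 i.1.succ := by
          refine Finset.sum_congr rfl fun i _ => ?_
          rw [hRR 0 i.1.succ]
      _ = ω := by rw [hω, omegaOf]
  have hvv : ∑ j, v j * v j = ω := by
    rw [hv]
    calc ∑ j, (∑ i : {i // i ∈ s}, a i * R i.1.succ j) * ∑ i : {i // i ∈ s}, a i * R i.1.succ j
        = ∑ j, ∑ i : {i // i ∈ s}, a i * (R i.1.succ j * ∑ i' : {i // i ∈ s}, a i' * R i'.1.succ j) := by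
          refine Finset.sum_congr rfl fun j _ => ?_
          rw [Finset.sum_mul]
          exact Finset.sum_congr rfl fun i _ => by ring
      _ = ∑ i : {i // i ∈ s}, a i * ∑ j, R i.1.succ j * ∑ i' : {i // i ∈ s}, a i' * R i'.1.succ j := by
          rw [Finset.sum_comm]
          exact Finset.sum_congr rfl fun i _ => by rw [Finset.mul_sum]
      _ = ∑ i : {i // i ∈ s}, a i * (∑ i' : {i // i ∈ s}, a i' * ∑ j, R i.1.succ j * R i'.1.succ j) := by
          refine Finset.sum_congr rfl fun i _ => ?_
          congr 1
          calc ∑ j, R i.1.succ j * ∑ i' : {i // i ∈ s}, a i' * R i'.1.succ j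
              = ∑ j, ∑ i' : {i // i ∈ s}, a i' * (R i.1.succ j * R i'.1.succ j) := by
                refine Finset.sum_congr rfl fun j _ => ?_
                rw [Finset.mul_sum]
                exact Finset.sum_congr rfl fun i' _ => by ring
            _ = ∑ i' : {i // i ∈ s}, a i' * ∑ j, R i.1.succ j * R i'.1.succ j := by
                rw [Finset.sum_comm]
                exact Finset.sum_congr rfl fun i' _ => by rw [Finset.mul_sum]
      _ = ω := by
          rw [← hquad]
          refine Finset.sum_congr rfl fun i _ => ?_
          congr 1
          refine Finset.sum_congr rfl fun i' _ => ?_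
          rw [hRR i.1.succ i'.1.succ]
          rw [hB]
          simp
          ring
  -- nonneg shift
  set d : ℝ := ∑ i : {i // i ∈ s}, a i * δ i.1 with hd
  have hd0 : 0 ≤ d := Finset.sum_nonneg fun i _ => mul_nonneg (hann i) (hδ i.1)
  -- n ≥ 2 when ω ≠ 0
  have hn : ω ≠ 0 → 1 < k + 1 := by
    intro hne
    rcases Finset.eq_empty_or_nonempty s with rfl | ⟨i, hi⟩
    · exfalso
      apply hne
      haveI : IsEmpty {i // i ∈ (∅ : Finset (Fin k))} :=
        ⟨fun x => (Finset.notMem_empty _ x.2)⟩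
      rw [hω, omegaOf]
      simp
    · have : 0 < k := i.pos
      omega
  -- the affine map
  set Φ : (Fin (k+1) → ℝ) → (Fin (k+1) → ℝ) :=
    fun x (i : Fin (k + 1)) => Fin.cases β δ i + ∑ j, R i j * x j with hΦ
  have hΦmeas : Measurable Φ := by
    apply measurable_pi_lambda
    intro i
    apply Measurable.const_add
    exact Finset.measurable_sum _ fun j _ => (measurable_pi_apply j).const_mul _
  have hAmeas : MeasurableSet A := by
    rw [hA]
    apply measurableSet_le
    · apply Measurable.sub
      · exact measurable_pi_apply 0
      · apply Measurable.min measurable_const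
        apply Measurable.add_const
        exact Finset.measurable_sum _ fun j _ => (measurable_pi_apply j.1.succ).const_mul _
    · exact measurable_const
  have hlaw : gaussLaw R β δ A = nuPi (k+1) (Φ ⁻¹' A) := by
    rw [gaussLaw]
    rw [Measure.map_apply hΦmeas hAmeas]
    rfl
  -- preimage description
  have hpre : Φ ⁻¹' A = {x : Fin (k+1) → ℝ |
      ∑ j, u j * x j ≤ min zαγ (d + (∑ j, v j * x j) + c)} := by
    rw [hA]
    ext x
    simp only [Set.mem_preimage, Set.mem_setOf_eq]
    have h0 : Φ x 0 = β + ∑ j, R 0 j * x j := by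
      simp [hΦ]
    have hsucc : ∀ i : {i // i ∈ s}, Φ x i.1.succ = δ i.1 + ∑ j, R i.1.succ j * x j := by
      intro i
      simp [hΦ]
    have hsum : (∑ i : {i // i ∈ s}, a i * Φ x i.1.succ) = d + ∑ j, v j * x j := by
      calc (∑ i : {i // i ∈ s}, a i * Φ x i.1.succ)
          = ∑ i : {i // i ∈ s}, (a i * δ i.1 + a i * ∑ j, R i.1.succ j * x j) := by
            refine Finset.sum_congr rfl fun i _ => ?_
            rw [hsucc i]; ring
        _ = d + ∑ i : {i // i ∈ s}, a i * ∑ j, R i.1.succ j * x j := by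
            rw [Finset.sum_add_distrib, hd]
        _ = d + ∑ j, v j * x j := by
            congr 1
            rw [hv]
            calc ∑ i : {i // i ∈ s}, a i * ∑ j, R i.1.succ j * x j
                = ∑ i : {i // i ∈ s}, ∑ j, a i * R i.1.succ j * x j := by
                  refine Finset.sum_congr rfl fun i _ => ?_
                  rw [Finset.mul_sum]
                  exact Finset.sum_congr rfl fun j _ => by ring
              _ = ∑ j, ∑ i : {i // i ∈ s}, a i * R i.1.succ j * x j := Finset.sum_comm
              _ = ∑ j, (∑ i : {i // i ∈ s}, a i * R i.1.succ j) * x j := by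
                  refine Finset.sum_congr rfl fun j _ => ?_
                  rw [Finset.sum_mul]
    rw [h0, hsum]
    have hZ : ∑ j, u j * x j = ∑ j, R 0 j * x j := rfl
    rw [← hZ]
    constructor
    · intro h; linarith [h]
    · intro h; linarith [h]
  -- measurability of target sets
  have hmeas_low : MeasurableSet {q : ℝ × ℝ | q.1 ≤ min zαγ (q.2 + c)} := by
    apply measurableSet_le measurable_fst
    exact Measurable.min measurable_const (measurable_snd.add_const _)
  have hpairmeas : Measurable (fun x : Fin (k+1) → ℝ => (∑ j, u j * x j, ∑ j, v j * x j)) :=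
    (measurable_form u).prodMk (measurable_form v)
  have hjoint := joint_law u v ω hω0 hω1 hn huu huv hvv
  -- lower bound
  have hlow : ENNReal.ofReal (1 - α) ≤ gaussLaw R β δ A := by
    rw [hlaw, hpre]
    have hsub : {x : Fin (k+1) → ℝ | ∑ j, u j * x j ≤ min zαγ ((∑ j, v j * x j) + c)}
        ⊆ {x : Fin (k+1) → ℝ | ∑ j, u j * x j ≤ min zαγ (d + (∑ j, v j * x j) + c)} := by
      intro x hx
      simp only [Set.mem_setOf_eq] at hx ⊢
      refine le_trans hx (le_min (min_le_left _ _) ?_)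
      refine le_trans (min_le_right _ _) ?_
      linarith
    refine le_trans (le_of_eq ?_) (measure_mono hsub)
    have h1 : {x : Fin (k+1) → ℝ | ∑ j, u j * x j ≤ min zαγ ((∑ j, v j * x j) + c)}
        = (fun x : Fin (k+1) → ℝ => (∑ j, u j * x j, ∑ j, v j * x j)) ⁻¹'
          {q : ℝ × ℝ | q.1 ≤ min zαγ (q.2 + c)} := rfl
    rw [h1, ← Measure.map_apply hpairmeas hmeas_low, hjoint,
      Measure.map_apply (measurable_fst.prodMk (by
        apply Measurable.add
        · exact measurable_fst.const_mul ω
        · exact measurable_snd.const_mul _)) hmeas_low]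
    have h2 : (fun p : ℝ × ℝ => (p.1, Ztilde2 ω p)) ⁻¹' {q : ℝ × ℝ | q.1 ≤ min zαγ (q.2 + c)}
        = {p : ℝ × ℝ | min zαγ (Ztilde2 ω p + c) < p.1}ᶜ := by
      ext p
      simp only [Set.mem_preimage, Set.mem_setOf_eq, Set.mem_compl_iff, not_lt]
    rw [h2, measure_compl (by
        apply measurableSet_lt
        · apply Measurable.min measurable_const
          apply Measurable.add_const
          apply Measurable.add
          · exact measurable_fst.const_mul ω
          · exact measurable_snd.const_mul _
        · exact measurable_fst) (measure_ne_top _ _), hc]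
    rw [measure_univ]
    rw [← ENNReal.ofReal_one, ← ENNReal.ofReal_sub _ (le_of_lt hα0)]
  -- upper bound
  have hup : gaussLaw R β δ A ≤ ENNReal.ofReal (1 - α + γ) := by
    rw [hlaw, hpre]
    have hsub : {x : Fin (k+1) → ℝ | ∑ j, u j * x j ≤ min zαγ (d + (∑ j, v j * x j) + c)}
        ⊆ {x : Fin (k+1) → ℝ | ∑ j, u j * x j ≤ zαγ} := by
      intro x hx
      simp only [Set.mem_setOf_eq] at hx ⊢
      exact le_trans hx (min_le_left _ _)
    refine le_trans (measure_mono hsub) (le_of_eq ?_)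
    have h1 : {x : Fin (k+1) → ℝ | ∑ j, u j * x j ≤ zαγ}
        = (fun x : Fin (k+1) → ℝ => ∑ j, u j * x j) ⁻¹' (Set.Iic zαγ) := rfl
    rw [h1, ← Measure.map_apply (measurable_form u) measurableSet_Iic,
      map_form_nuPi u (by
        rw [← huu]
        exact Finset.sum_congr rfl fun j _ => pow_two (u j)), hzαγ]
  exact ⟨hlow, hup⟩
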